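/- Let n = 2m and fix a count vector of the form v = (v₁₁, 0, 0, v₀₀) with v₁₁ + v₀₀ = n. Then the probability mass function of T(v, Z) is symmetric–decreasing on the lattice m^{-1}(2ℤ) if v₁₁ is even, and symmetric–decreasing on the lattice m^{-1}(2ℤ + 1) if v₁₁ is odd. -/

import Mathlib

open Finset

/-- Real value of a binary outcome. -/
noncomputable def b2r (b : Bool) : ℝ := if b then 1 else 0

/-- All assignments of `n` subjects in which exactly `m` receive treatment. -/
def Assign (n m : ℕ) : Finset (Fin n → Bool) :=
  Finset.univ.filter fun z => (Finset.univ.filter fun i => z i = true).card = m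

/-- Probability of the event `E` under the uniform distribution on `Assign n m`. -/
noncomputable def Pr (n m : ℕ) (E : (Fin n → Bool) → Prop) : ℝ :=
  haveI : DecidablePred E := fun z => Classical.propDecidable (E z)
  (((Assign n m).filter E).card : ℝ) / ((Assign n m).card : ℝ)

/-- The sample average treatment effect `τ(w)`.  For a table `w`, `(w i).1` is the
control potential outcome `w_i(0)` and `(w i).2` is the treatment potential outcome
`w_i(1)`. -/
noncomputable def sate (n : ℕ) (w : Fin n → Bool × Bool) : ℝ :=
  (∑ j, (b2r (w j).2 - b2r (w j).1)) / (n : ℝ)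

/-- Observed outcomes generated by the table `w` under the assignment `z`. -/
def obsOutcome (n : ℕ) (w : Fin n → Bool × Bool) (z : Fin n → Bool) : Fin n → Bool :=
  fun j => if z j then (w j).2 else (w j).1

/-- The Neyman difference-in-means estimator `T(Y, z)`. -/
noncomputable def neyman (n m : ℕ) (Y z : Fin n → Bool) : ℝ :=
  (∑ j, if z j then b2r (Y j) else 0) / (m : ℝ)
    - (∑ j, if z j then 0 else b2r (Y j)) / ((n : ℝ) - (m : ℝ))

/-- Permutation `p`-value of the table `w` given observed data `(Y, z)`. -/
noncomputable def pval (n m : ℕ) (w : Fin n → Bool × Bool) (Y z : Fin n → Bool) : ℝ :=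
  Pr n m fun z' =>
    |neyman n m (obsOutcome n w z') z' - sate n w| ≥ |neyman n m Y z - sate n w|

/-- The table `w` is possible given the observed data `(Y, z)`. -/
def PossibleTable (n : ℕ) (w : Fin n → Bool × Bool) (Y z : Fin n → Bool) : Prop :=
  ∀ j, (z j = true → (w j).2 = Y j) ∧ (z j = false → (w j).1 = Y j)

/-- Lower endpoint `L_α` of the exact confidence interval `I_α`. -/
noncomputable def Lb (n m : ℕ) (α : ℝ) (Y z : Fin n → Bool) : ℝ :=
  sInf {t : ℝ | ∃ w, PossibleTable n w Y z ∧ α ≤ pval n m w Y z ∧ sate n w = t}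

/-- Upper endpoint `U_α` of the exact confidence interval `I_α`. -/
noncomputable def Ub (n m : ℕ) (α : ℝ) (Y z : Fin n → Bool) : ℝ :=
  sSup {t : ℝ | ∃ w, PossibleTable n w Y z ∧ α ≤ pval n m w Y z ∧ sate n w = t}

/-- `vcount n w a b` is the number of subjects whose treatment potential outcome is `a`
and whose control potential outcome is `b`; e.g. `vcount n w true false = v₁₀`. -/
def vcount (n : ℕ) (w : Fin n → Bool × Bool) (a b : Bool) : ℕ :=
  (Finset.univ.filter fun i => (w i).2 = a ∧ (w i).1 = b).card

/-- `ncount n Y z a b = n_{ab}`, the number of subjects with assignment `a` and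
observed outcome `b`. -/
def ncount (n : ℕ) (Y z : Fin n → Bool) (a b : Bool) : ℕ :=
  (Finset.univ.filter fun j => z j = a ∧ Y j = b).card

/-- The pmf of the Neyman estimator `T(w, Z)` under the uniform random assignment. -/
noncomputable def pmfT (n m : ℕ) (w : Fin n → Bool × Bool) : ℝ → ℝ :=
  fun t => Pr n m fun z => neyman n m (obsOutcome n w z) z = t

/-- The lattice `m⁻¹ ℤ ⊆ ℝ`. -/
def lattZ (m : ℕ) : Set ℝ := {x | ∃ k : ℤ, x = (k : ℝ) / (m : ℝ)}

/-- The lattice `m⁻¹ (2ℤ) ⊆ ℝ`. -/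
def lattEven (m : ℕ) : Set ℝ := {x | ∃ k : ℤ, x = (2 * (k : ℝ)) / (m : ℝ)}

/-- The lattice `m⁻¹ (2ℤ + 1) ⊆ ℝ`. -/
def lattOdd (m : ℕ) : Set ℝ := {x | ∃ k : ℤ, x = (2 * (k : ℝ) + 1) / (m : ℝ)}

/-- `f` is symmetric about `μ` and decreasing away from `μ` along the lattice `L`
(symmetric–decreasing, SD). -/
def SDon (f : ℝ → ℝ) (L : Set ℝ) (μ : ℝ) : Prop :=
  (∀ x : ℝ, μ + x ∈ L → f (μ - x) = f (μ + x)) ∧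
    ∀ x y : ℝ, 0 ≤ x → x ≤ y → μ + x ∈ L → μ + y ∈ L → f (μ + y) ≤ f (μ + x)

/-- In a balanced design, for a count vector of the form
`v = (v₁₁, 0, 0, v₀₀)`, the pmf of `T(v, Z)` is symmetric–decreasing on the lattice
`m⁻¹(2ℤ)` if `v₁₁` is even, and on `m⁻¹(2ℤ + 1)` if `v₁₁` is odd. -/
def Sfun (n : ℕ) (Y z : Fin n → Bool) : ℕ :=
  (Finset.univ.filter fun j => z j = true ∧ Y j = true).card

lemma count_formula (n m : ℕ) (Y : Fin n → Bool) (s : ℕ) (hs : s ≤ m) :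
    ((Assign n m).filter fun z => Sfun n Y z = s).card
      = ((Finset.univ.filter fun j => Y j = true).card).choose s *
        (((Finset.univ.filter fun j => Y j = true)ᶜ).card).choose (m - s) := by
  classical
  set A : Finset (Fin n) := Finset.univ.filter fun j => Y j = true with hA
  rw [← Finset.card_powersetCard s A, ← Finset.card_powersetCard (m - s) Aᶜ,
    ← Finset.card_product]
  refine Finset.card_bij
    (fun z _ => (A.filter (fun j => z j = true), Aᶜ.filter (fun j => z j = true)))
    ?_ ?_ ?_
  · intro z hz
    rw [Finset.mem_filter] at hz
    obtain ⟨hz1, hz2⟩ := hz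
    have hzm : (Finset.univ.filter fun i => z i = true).card = m := by
      simpa [Assign] using hz1
    have e1 : A.filter (fun j => z j = true)
        = Finset.univ.filter (fun j => z j = true ∧ Y j = true) := by
      rw [hA, Finset.filter_filter]
      exact Finset.filter_congr fun j _ => and_comm
    have e2 : Aᶜ.filter (fun j => z j = true)
        = Finset.univ.filter (fun j => z j = true ∧ ¬ Y j = true) := by
      ext j
      simp only [hA, Finset.mem_filter, Finset.mem_compl, Finset.mem_univ, true_and]
      tauto
    have hsplit : (Finset.univ.filter (fun j => z j = true ∧ Y j = true)).card +
        (Finset.univ.filter (fun j => z j = true ∧ ¬ Y j = true)).card = m := by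
      rw [← hzm, ← Finset.filter_filter, ← Finset.filter_filter]
      exact Finset.card_filter_add_card_filter_not _
    rw [Finset.mem_product, Finset.mem_powersetCard, Finset.mem_powersetCard]
    dsimp only
    refine ⟨⟨Finset.filter_subset _ _, ?_⟩, Finset.filter_subset _ _, ?_⟩
    · rw [e1]; exact hz2
    · rw [e2]
      have := hz2
      unfold Sfun at this
      omega
  · intro z1 h1 z2 h2 he
    have heA : A.filter (fun j => z1 j = true) = A.filter (fun j => z2 j = true) :=
      congrArg Prod.fst he
    have heC : Aᶜ.filter (fun j => z1 j = true) = Aᶜ.filter (fun j => z2 j = true) :=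
      congrArg Prod.snd he
    funext j
    by_cases hj : Y j = true
    · have hjA : j ∈ A := by simp [hA, hj]
      have h := Finset.ext_iff.mp heA j
      simp only [Finset.mem_filter, hjA, true_and] at h
      cases h1' : z1 j <;> cases h2' : z2 j <;> simp_all
    · have hjA : j ∈ Aᶜ := by simp [hA, hj]
      have h := Finset.ext_iff.mp heC j
      simp only [Finset.mem_filter, hjA, true_and] at h
      cases h1' : z1 j <;> cases h2' : z2 j <;> simp_all
  · rintro ⟨P, Q⟩ hp
    rw [Finset.mem_product, Finset.mem_powersetCard, Finset.mem_powersetCard] at hp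
    obtain ⟨⟨hP, hPc⟩, hQ, hQc⟩ := hp
    have hPY : ∀ j ∈ P, Y j = true := by
      intro j hj; have := hP hj; simpa [hA] using this
    have hQY : ∀ j ∈ Q, ¬ Y j = true := by
      intro j hj; have := hQ hj; simpa [hA] using this
    have hdisj : Disjoint P Q := disjoint_compl_right.mono hP hQ
    refine ⟨fun j => decide (j ∈ P ∪ Q), ?_, ?_⟩
    · rw [Finset.mem_filter]
      have hzid : (Finset.univ.filter fun j => (decide (j ∈ P ∪ Q)) = true) = P ∪ Q := by
        ext j; simp
      constructor
      · simp only [Assign, Finset.mem_filter, Finset.mem_univ, true_and]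
        rw [hzid, Finset.card_union_of_disjoint hdisj, hPc, hQc]
        omega
      · unfold Sfun
        have : (Finset.univ.filter fun j => (decide (j ∈ P ∪ Q)) = true ∧ Y j = true) = P := by
          ext j
          simp only [Finset.mem_filter, Finset.mem_univ, true_and, decide_eq_true_eq,
            Finset.mem_union]
          constructor
          · rintro ⟨hmem | hmem, hYj⟩
            · exact hmem
            · exact absurd hYj (hQY j hmem)
          · intro hPj; exact ⟨Or.inl hPj, hPY j hPj⟩
        rw [this, hPc]
    · have e1 : A.filter (fun j => (decide (j ∈ P ∪ Q)) = true) = P := by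
        ext j
        simp only [hA, Finset.mem_filter, Finset.mem_univ, true_and, decide_eq_true_eq,
          Finset.mem_union]
        constructor
        · rintro ⟨hYj, hmem | hmem⟩
          · exact hmem
          · exact absurd hYj (hQY j hmem)
        · intro hPj; exact ⟨hPY j hPj, Or.inl hPj⟩
      have e2 : Aᶜ.filter (fun j => (decide (j ∈ P ∪ Q)) = true) = Q := by
        ext j
        simp only [hA, Finset.mem_filter, Finset.mem_compl, Finset.mem_univ, true_and,
          decide_eq_true_eq, Finset.mem_union]
        constructor
        · rintro ⟨hYj, hmem | hmem⟩
          · exact absurd (hPY j hmem) hYj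
          · exact hmem
        · intro hQj; exact ⟨hQY j hQj, Or.inr hQj⟩
      simp only [e1, e2]

lemma nat_key (a b m s : ℕ) (hab : a + b = 2 * m) (hs : a ≤ 2 * s) (hsm : s < m) :
    a.choose (s + 1) * b.choose (m - (s + 1)) ≤ a.choose s * b.choose (m - s) := by
  have h1 : a.choose (s + 1) * (s + 1) = a.choose s * (a - s) := Nat.choose_succ_right_eq a s
  have hms : m - s = (m - s - 1) + 1 := by omega
  have h2 : b.choose (m - s) * (m - s) = b.choose (m - s - 1) * (b - (m - s - 1)) := by
    rw [hms, Nat.choose_succ_right_eq]; simp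
  have hpos : 0 < (s + 1) * (m - s) := by
    apply Nat.mul_pos <;> omega
  apply Nat.le_of_mul_le_mul_right _ hpos
  have hstep : (a - s) * (m - s) ≤ (s + 1) * (b - (m - s - 1)) :=
    Nat.mul_le_mul (by omega) (by omega)
  calc a.choose (s + 1) * b.choose (m - (s + 1)) * ((s + 1) * (m - s))
      = (a.choose (s + 1) * (s + 1)) * (b.choose (m - s - 1) * (m - s)) := by
        rw [show m - (s + 1) = m - s - 1 by omega]; ring
    _ = (a.choose s * (a - s)) * (b.choose (m - s - 1) * (m - s)) := by rw [h1]
    _ = (a.choose s * b.choose (m - s - 1)) * ((a - s) * (m - s)) := by ring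
    _ ≤ (a.choose s * b.choose (m - s - 1)) * ((s + 1) * (b - (m - s - 1))) :=
        Nat.mul_le_mul_left _ hstep
    _ = (a.choose s) * (b.choose (m - s - 1) * (b - (m - s - 1))) * (s + 1) := by ring
    _ = (a.choose s) * (b.choose (m - s) * (m - s)) * (s + 1) := by rw [h2]
    _ = a.choose s * b.choose (m - s) * ((s + 1) * (m - s)) := by ring

lemma Sfun_le (n m : ℕ) (Y z : Fin n → Bool) (hz : z ∈ Assign n m) : Sfun n Y z ≤ m := by
  have hzm : (Finset.univ.filter fun i => z i = true).card = m := by simpa [Assign] using hz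
  rw [← hzm]
  apply Finset.card_le_card
  intro j hj
  simp only [Finset.mem_filter] at *
  tauto

lemma N_mono (n m : ℕ) (hn : n = 2 * m) (Y : Fin n → Bool) (s t : ℕ)
    (hs : (Finset.univ.filter fun j => Y j = true).card ≤ 2 * s) (hst : s ≤ t) :
    ((Assign n m).filter fun z => Sfun n Y z = t).card ≤
      ((Assign n m).filter fun z => Sfun n Y z = s).card := by
  induction t, hst using Nat.le_induction with
  | base => exact le_rfl
  | succ t ht ih =>
    refine le_trans ?_ ih
    by_cases htm : t < m
    · rw [count_formula n m Y (t + 1) (by omega), count_formula n m Y t (by omega)]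
      apply nat_key
      · rw [Finset.card_compl, Fintype.card_fin]
        have := Finset.card_le_univ (Finset.univ.filter fun j => Y j = true)
        simp only [Finset.card_univ, Fintype.card_fin] at this
        omega
      · omega
      · exact htm
    · have : ((Assign n m).filter fun z => Sfun n Y z = t + 1) = ∅ := by
        rw [Finset.filter_eq_empty_iff]
        intro z hz h
        have := Sfun_le n m Y z hz
        omega
      rw [this]
      simp

theorem stmt12 (m : ℕ) (hm : 0 < m) (n : ℕ) (hn : n = 2 * m)
    (w : Fin n → Bool × Bool)
    (h10 : vcount n w true false = 0) (h01 : vcount n w false true = 0) :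
    (Even (vcount n w true true) → SDon (pmfT n m w) (lattEven m) (sate n w)) ∧
      (Odd (vcount n w true true) → SDon (pmfT n m w) (lattOdd m) (sate n w)) := by
  classical
  subst hn
  -- all subjects have equal potential outcomes
  have h10' : ∀ j : Fin (2*m), ¬((w j).2 = true ∧ (w j).1 = false) := by
    intro j hj
    have h := Finset.filter_eq_empty_iff.mp (Finset.card_eq_zero.mp h10)
    exact h (Finset.mem_univ j) hj
  have h01' : ∀ j : Fin (2*m), ¬((w j).2 = false ∧ (w j).1 = true) := by
    intro j hj
    have h := Finset.filter_eq_empty_iff.mp (Finset.card_eq_zero.mp h01)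
    exact h (Finset.mem_univ j) hj
  have hY : ∀ j, (w j).1 = (w j).2 := by
    intro j
    cases h1 : (w j).1 <;> cases h2 : (w j).2
    · rfl
    · exact absurd ⟨h2, h1⟩ (h10' j)
    · exact absurd ⟨h2, h1⟩ (h01' j)
    · rfl
  set Y : Fin (2*m) → Bool := fun j => (w j).2 with hYdef
  have hobs : ∀ z, obsOutcome (2*m) w z = Y := by
    intro z; funext j
    simp only [obsOutcome, hYdef]
    cases hz : z j <;> simp [hY j]
  have hsate : sate (2*m) w = 0 := by
    simp [sate, hY]
  set a : ℕ := (Finset.univ.filter fun j => Y j = true).card with hadef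
  have haA : vcount (2*m) w true true = a := by
    unfold vcount
    rw [hadef]
    congr 1
    refine Finset.filter_congr fun j _ => ?_
    simp [hYdef, hY j]
  have hmne : (m : ℝ) ≠ 0 := Nat.cast_ne_zero.mpr hm.ne'
  -- neyman in terms of Sfun
  have hsum1 : ∀ z : Fin (2*m) → Bool,
      (∑ j, if z j then b2r (Y j) else 0) = ((Sfun (2*m) Y z : ℕ) : ℝ) := by
    intro z
    rw [show (∑ j, if z j then b2r (Y j) else 0)
        = ∑ j, (if (z j = true ∧ Y j = true) then (1:ℝ) else 0) from
      Finset.sum_congr rfl fun j _ => by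
        cases hz : z j <;> cases hy : Y j <;> simp [b2r, hz, hy]]
    rw [Finset.sum_boole]
    rfl
  have hsum0 : ∀ z : Fin (2*m) → Bool,
      (∑ j, if z j then (0:ℝ) else b2r (Y j))
        = ((Finset.univ.filter fun j => ¬ z j = true ∧ Y j = true).card : ℝ) := by
    intro z
    rw [show (∑ j, if z j then (0:ℝ) else b2r (Y j))
        = ∑ j, (if (¬ z j = true ∧ Y j = true) then (1:ℝ) else 0) from
      Finset.sum_congr rfl fun j _ => by
        cases hz : z j <;> cases hy : Y j <;> simp [b2r, hz, hy]]
    rw [Finset.sum_boole]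
  have hsplit : ∀ z : Fin (2*m) → Bool,
      Sfun (2*m) Y z + (Finset.univ.filter fun j => ¬ z j = true ∧ Y j = true).card = a := by
    intro z
    have h := Finset.card_filter_add_card_filter_not
      (s := Finset.univ.filter fun j : Fin (2*m) => Y j = true) (p := fun j => z j = true)
    rw [Finset.filter_filter, Finset.filter_filter] at h
    rw [show (Finset.univ.filter fun j : Fin (2*m) => Y j = true ∧ z j = true)
        = Finset.univ.filter fun j => z j = true ∧ Y j = true from
      Finset.filter_congr fun j _ => and_comm] at h
    rw [show (Finset.univ.filter fun j : Fin (2*m) => Y j = true ∧ ¬ z j = true)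
        = Finset.univ.filter fun j => ¬ z j = true ∧ Y j = true from
      Finset.filter_congr fun j _ => and_comm] at h
    exact h
  have hney : ∀ z : Fin (2*m) → Bool,
      neyman (2*m) m Y z = (2 * (Sfun (2*m) Y z : ℝ) - a) / m := by
    intro z
    unfold neyman
    rw [hsum1 z, hsum0 z]
    have h2m : (((2*m : ℕ) : ℝ) - (m : ℝ)) = m := by push_cast; ring
    rw [h2m]
    have hc : ((Finset.univ.filter fun j => ¬ z j = true ∧ Y j = true).card : ℝ)
        = (a : ℝ) - (Sfun (2*m) Y z : ℝ) := by
      have := hsplit z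
      have : ((Sfun (2*m) Y z : ℕ) : ℝ)
          + ((Finset.univ.filter fun j => ¬ z j = true ∧ Y j = true).card : ℝ) = a := by
        exact_mod_cast this
      linarith
    rw [hc]
    field_simp
    ring
  -- pmf as a ratio of counts
  have hpmf : ∀ t : ℝ, pmfT (2*m) m w t
      = (((Assign (2*m) m).filter fun z => neyman (2*m) m Y z = t).card : ℝ)
        / ((Assign (2*m) m).card : ℝ) := by
    intro t
    unfold pmfT Pr
    congr 1
    have hcard : (((Assign (2*m) m).filter
          fun z => neyman (2*m) m (obsOutcome (2*m) w z) z = t)).card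
        = (((Assign (2*m) m).filter fun z => neyman (2*m) m Y z = t)).card := by
      apply Finset.card_nbij' id id
      · intro z hz
        rw [Finset.mem_coe, Finset.mem_filter] at hz ⊢
        exact ⟨hz.1, by simp only [id_eq]; rw [← hobs z]; exact hz.2⟩
      · intro z hz
        rw [Finset.mem_coe, Finset.mem_filter] at hz ⊢
        exact ⟨hz.1, by simp only [id_eq]; rw [hobs z]; exact hz.2⟩
      · intro z _; rfl
      · intro z _; rfl
    exact_mod_cast hcard
  have h2mR : (((2*m : ℕ) : ℝ) - (m : ℝ)) = m := by push_cast; ring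
  -- complement involution
  have hassign_not : ∀ z : Fin (2*m) → Bool, z ∈ Assign (2*m) m →
      (fun j => !(z j)) ∈ Assign (2*m) m := by
    intro z hz
    have hzm : (Finset.univ.filter fun i => z i = true).card = m := by
      simpa [Assign] using hz
    simp only [Assign, Finset.mem_filter, Finset.mem_univ, true_and]
    have e : (Finset.univ.filter fun i => (!(z i)) = true)
        = (Finset.univ.filter fun i => z i = true)ᶜ := by
      ext j
      simp [Bool.not_eq_true']
    rw [e, Finset.card_compl, Fintype.card_fin, hzm]
    omega
  have hney_not : ∀ z : Fin (2*m) → Bool,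
      neyman (2*m) m Y (fun j => !(z j)) = - neyman (2*m) m Y z := by
    intro z
    unfold neyman
    have e1 : (∑ j, if (!(z j)) then b2r (Y j) else 0)
        = ∑ j, if z j then (0:ℝ) else b2r (Y j) :=
      Finset.sum_congr rfl fun j _ => by cases hz : z j <;> simp [hz]
    have e2 : (∑ j, if (!(z j)) then (0:ℝ) else b2r (Y j))
        = ∑ j, if z j then b2r (Y j) else 0 :=
      Finset.sum_congr rfl fun j _ => by cases hz : z j <;> simp [hz]
    rw [e1, e2, h2mR]
    ring
  have hsym : ∀ t : ℝ, pmfT (2*m) m w (-t) = pmfT (2*m) m w t := by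
    intro t
    rw [hpmf, hpmf]
    have hcard : ((Assign (2*m) m).filter fun z => neyman (2*m) m Y z = -t).card
        = ((Assign (2*m) m).filter fun z => neyman (2*m) m Y z = t).card := by
      apply Finset.card_nbij' (fun z => fun j => !(z j)) (fun z => fun j => !(z j))
      · intro z hz
        rw [Finset.mem_coe, Finset.mem_filter] at hz ⊢
        refine ⟨hassign_not z hz.1, ?_⟩
        rw [hney_not z, hz.2]
        ring
      · intro z hz
        rw [Finset.mem_coe, Finset.mem_filter] at hz ⊢
        refine ⟨hassign_not z hz.1, ?_⟩
        rw [hney_not z, hz.2]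
      · intro z _; funext j; simp
      · intro z _; funext j; simp
    rw [hcard]
  -- pointwise values of the pmf
  have hpoint : ∀ s : ℕ, pmfT (2*m) m w ((2 * (s:ℝ) - a) / m)
      = (((Assign (2*m) m).filter fun z => Sfun (2*m) Y z = s).card : ℝ)
        / ((Assign (2*m) m).card : ℝ) := by
    intro s
    rw [hpmf]
    have hiff : ∀ z : Fin (2*m) → Bool,
        (neyman (2*m) m Y z = (2*(s:ℝ) - a)/m) ↔ Sfun (2*m) Y z = s := by
      intro z
      rw [hney z]
      constructor
      · intro h
        rw [div_eq_div_iff hmne hmne] at h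
        have h' : (Sfun (2*m) Y z : ℝ) = (s : ℝ) := by
          have hm0 : (0:ℝ) < m := by exact_mod_cast hm
          nlinarith [h]
        exact_mod_cast h'
      · intro h
        rw [h]
    have hcard : ((Assign (2*m) m).filter fun z => neyman (2*m) m Y z = (2*(s:ℝ) - a)/m).card
        = ((Assign (2*m) m).filter fun z => Sfun (2*m) Y z = s).card := by
      apply Finset.card_nbij' id id
      · intro z hz
        rw [Finset.mem_coe, Finset.mem_filter] at hz ⊢
        exact ⟨hz.1, (hiff z).mp hz.2⟩
      · intro z hz
        rw [Finset.mem_coe, Finset.mem_filter] at hz ⊢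
        exact ⟨hz.1, (hiff z).mpr hz.2⟩
      · intro z _; rfl
      · intro z _; rfl
    rw [hcard]
  have hmono : ∀ s₁ s₂ : ℕ, a ≤ 2 * s₁ → s₁ ≤ s₂ →
      pmfT (2*m) m w ((2*(s₂:ℝ) - a)/m) ≤ pmfT (2*m) m w ((2*(s₁:ℝ) - a)/m) := by
    intro s₁ s₂ h1 h2
    rw [hpoint, hpoint]
    have hc := N_mono (2*m) m rfl Y s₁ s₂ h1 h2
    rcases Nat.eq_zero_or_pos (Assign (2*m) m).card with hD0 | hDpos
    · rw [hD0]
      simp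
    · apply (div_le_div_iff_of_pos_right (by exact_mod_cast hDpos : (0:ℝ) < ((Assign (2*m) m).card : ℝ))).mpr
      exact_mod_cast hc
  have hmpos : (0:ℝ) < m := by exact_mod_cast hm
  constructor
  · intro hEven
    obtain ⟨c, hc⟩ := hEven
    rw [haA] at hc
    constructor
    · intro x _
      rw [hsate, zero_sub, zero_add]
      exact hsym x
    · intro x y hx hxy hxL hyL
      rw [hsate, zero_add] at hxL
      rw [hsate, zero_add] at hyL
      rw [hsate, zero_add, zero_add]
      obtain ⟨k₁, hk₁⟩ := hxL
      obtain ⟨k₂, hk₂⟩ := hyL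
      have hk1nn : 0 ≤ k₁ := by
        by_contra hneg
        push_neg at hneg
        have hklt : (k₁ : ℝ) < 0 := by exact_mod_cast hneg
        have : x < 0 := by
          rw [hk₁]
          apply div_neg_of_neg_of_pos _ hmpos
          linarith
        linarith
      have hk12 : k₁ ≤ k₂ := by
        have h1 : (2*(k₁:ℝ))/m ≤ (2*(k₂:ℝ))/m := by rw [← hk₁, ← hk₂]; exact hxy
        have h2 := (div_le_div_iff_of_pos_right hmpos).mp h1
        have h3 : (k₁:ℝ) ≤ k₂ := by linarith
        exact_mod_cast h3
      have hk2nn : 0 ≤ k₂ := le_trans hk1nn hk12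
      have hx' : x = (2*((k₁.toNat + c : ℕ):ℝ) - a)/m := by
        rw [hk₁]
        congr 1
        have hcast : ((k₁.toNat : ℕ) : ℝ) = (k₁ : ℝ) := by
          exact_mod_cast Int.toNat_of_nonneg hk1nn
        push_cast [hcast, hc]
        ring
      have hy' : y = (2*((k₂.toNat + c : ℕ):ℝ) - a)/m := by
        rw [hk₂]
        congr 1
        have hcast : ((k₂.toNat : ℕ) : ℝ) = (k₂ : ℝ) := by
          exact_mod_cast Int.toNat_of_nonneg hk2nn
        push_cast [hcast, hc]
        ring
      rw [hx', hy']
      refine hmono _ _ (by omega) ?_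
      have := Int.toNat_le_toNat hk12
      omega
  · intro hOdd
    obtain ⟨c, hc⟩ := hOdd
    rw [haA] at hc
    constructor
    · intro x _
      rw [hsate, zero_sub, zero_add]
      exact hsym x
    · intro x y hx hxy hxL hyL
      rw [hsate, zero_add] at hxL
      rw [hsate, zero_add] at hyL
      rw [hsate, zero_add, zero_add]
      obtain ⟨k₁, hk₁⟩ := hxL
      obtain ⟨k₂, hk₂⟩ := hyL
      have hk1nn : 0 ≤ k₁ := by
        by_contra hneg
        push_neg at hneg
        have hklt : k₁ ≤ -1 := by omega
        have hklt' : (k₁ : ℝ) ≤ -1 := by exact_mod_cast hklt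
        have : x < 0 := by
          rw [hk₁]
          apply div_neg_of_neg_of_pos _ hmpos
          linarith
        linarith
      have hk12 : k₁ ≤ k₂ := by
        have h1 : (2*(k₁:ℝ)+1)/m ≤ (2*(k₂:ℝ)+1)/m := by rw [← hk₁, ← hk₂]; exact hxy
        have h2 := (div_le_div_iff_of_pos_right hmpos).mp h1
        have h3 : (k₁:ℝ) ≤ k₂ := by linarith
        exact_mod_cast h3
      have hk2nn : 0 ≤ k₂ := le_trans hk1nn hk12
      have hx' : x = (2*((k₁.toNat + c + 1 : ℕ):ℝ) - a)/m := by
        rw [hk₁]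
        congr 1
        have hcast : ((k₁.toNat : ℕ) : ℝ) = (k₁ : ℝ) := by
          exact_mod_cast Int.toNat_of_nonneg hk1nn
        push_cast [hcast, hc]
        ring
      have hy' : y = (2*((k₂.toNat + c + 1 : ℕ):ℝ) - a)/m := by
        rw [hk₂]
        congr 1
        have hcast : ((k₂.toNat : ℕ) : ℝ) = (k₂ : ℝ) := by
          exact_mod_cast Int.toNat_of_nonneg hk2nn
        push_cast [hcast, hc]
        ring
      rw [hx', hy']
      refine hmono _ _ (by omega) ?_
      have := Int.toNat_le_toNat hk12
      omega
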